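/- Let $(V,T,w)$ be a metric space with terminal set $T\subseteq V$, $|T|=k$. Then the minimum weight of a spanning tree of the induced metric on $T$ is at most twice the minimum Steiner tree cost $\mathrm{ST}(V,T,w)$ (the minimum total weight of a tree in the complete graph on $V$ that spans all vertices of $T$). -/

import Mathlib

/-- The weight of an unordered edge, obtained by symmetrizing `w`. For a symmetric
`w` this is just `w` applied to the two endpoints. -/
noncomputable def edgeW {V : Type*} (w : V → V → ℝ) : Sym2 V → ℝ :=
  Sym2.lift ⟨fun a b => (w a b + w b a) / 2, fun a b => by ring⟩

/-- Total weight of a finite set of unordered edges. -/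
noncomputable def treeCost {V : Type*} (w : V → V → ℝ) (E : Finset (Sym2 V)) : ℝ :=
  ∑ e ∈ E, edgeW w e

/-- The edge set `E` connects all terminals of `T` to each other. -/
def Connects {V : Type*} (E : Finset (Sym2 V)) (T : Finset V) : Prop :=
  ∀ u ∈ T, ∀ v ∈ T, (SimpleGraph.fromEdgeSet (E : Set (Sym2 V))).Reachable u v

/-- `E` is (the edge set of) a Steiner tree for the terminal set `T`: its edges are
non-loops, form an acyclic graph, and connect all terminals. -/
def IsSteinerTree {V : Type*} (E : Finset (Sym2 V)) (T : Finset V) : Prop :=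
  (∀ e ∈ E, ¬ e.IsDiag) ∧
  (SimpleGraph.fromEdgeSet (E : Set (Sym2 V))).IsAcyclic ∧ Connects E T

open scoped Classical

set_option linter.unusedSectionVars false
namespace StAux

open SimpleGraph

variable {V : Type*} [DecidableEq V]

noncomputable def pathCost (w : V → V → ℝ) : List V → ℝ
  | [] => 0
  | [_] => 0
  | a :: b :: l => w a b + pathCost w (b :: l)

@[simp] lemma pathCost_nil (w : V → V → ℝ) : pathCost w ([] : List V) = 0 := rfl
@[simp] lemma pathCost_single (w : V → V → ℝ) (a : V) : pathCost w [a] = 0 := rfl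
@[simp] lemma pathCost_cons₂ (w : V → V → ℝ) (a b : V) (l : List V) :
    pathCost w (a :: b :: l) = w a b + pathCost w (b :: l) := rfl

lemma edgeW_mk (w : V → V → ℝ) (hsymm : ∀ a b, w a b = w b a) (a b : V) :
    edgeW w s(a, b) = w a b := by
  show (w a b + w b a) / 2 = w a b
  rw [← hsymm a b]; ring

lemma edgeW_nonneg (w : V → V → ℝ) (hnn : ∀ a b, 0 ≤ w a b) (e : Sym2 V) :
    0 ≤ edgeW w e := by
  induction e using Sym2.ind with
  | _ a b =>
    show 0 ≤ (w a b + w b a) / 2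
    have := hnn a b; have := hnn b a; linarith

lemma treeCost_nonneg (w : V → V → ℝ) (hnn : ∀ a b, 0 ≤ w a b) (E : Finset (Sym2 V)) :
    0 ≤ treeCost w E :=
  Finset.sum_nonneg fun e _ => edgeW_nonneg w hnn e

lemma treeCost_mono (w : V → V → ℝ) (hnn : ∀ a b, 0 ≤ w a b) {E F : Finset (Sym2 V)}
    (h : E ⊆ F) : treeCost w E ≤ treeCost w F :=
  Finset.sum_le_sum_of_subset_of_nonneg h fun e _ _ => edgeW_nonneg w hnn e

section PC
variable (w : V → V → ℝ) (hnn : ∀ a b, 0 ≤ w a b) (htri : ∀ a b c, w a c ≤ w a b + w b c)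
include hnn htri

lemma pathCost_cons_le : ∀ (M : List V) (c d : V),
    pathCost w (c :: M) ≤ w c d + pathCost w (d :: M) := by
  intro M c d
  cases M with
  | nil => simpa using hnn c d
  | cons m M' =>
    simp only [pathCost_cons₂]
    have := htri c d m
    linarith

lemma pathCost_append_single : ∀ (M : List V) (c : V),
    pathCost w M ≤ pathCost w (M ++ [c]) := by
  intro M
  induction M with
  | nil => intro c; simp
  | cons x M' ih =>
    intro c
    cases M' with
    | nil => simpa using hnn x c
    | cons y M'' =>
      simp only [List.cons_append, pathCost_cons₂]
      have := ih c
      simp only [List.cons_append] at this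
      linarith

lemma pathCost_via : ∀ (X Y : List V) (c : V),
    pathCost w (X ++ Y) ≤ pathCost w (X ++ [c]) + pathCost w (c :: Y) := by
  intro X
  induction X with
  | nil =>
    intro Y c
    simp only [List.nil_append]
    have := pathCost_cons_le w hnn htri Y c c
    cases Y with
    | nil => simp
    | cons y Y' =>
      simp only [pathCost_cons₂, pathCost_single]
      have := hnn c y
      linarith
  | cons x X' ih =>
    intro Y c
    cases X' with
    | nil =>
      cases Y with
      | nil => simpa using hnn x c
      | cons y Y' =>
        simp only [List.cons_append, List.nil_append, pathCost_cons₂, pathCost_single]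
        have := htri x c y
        linarith
    | cons x' X'' =>
      simp only [List.cons_append, pathCost_cons₂] at *
      have := ih Y c
      linarith

lemma pathCost_filter (p : V → Bool) : ∀ (M : List V) (a : V),
    pathCost w (a :: M.filter p) ≤ pathCost w (a :: M) := by
  intro M
  induction M with
  | nil => intro a; simp
  | cons x M' ih =>
    intro a
    by_cases hx : p x = true
    · rw [List.filter_cons_of_pos hx]
      simp only [pathCost_cons₂]
      have := ih x
      linarith
    · rw [List.filter_cons_of_neg (by simpa using hx)]
      calc pathCost w (a :: M'.filter p) ≤ pathCost w (a :: M') := ih a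
        _ ≤ w a x + pathCost w (x :: M') := pathCost_cons_le w hnn htri M' a x
        _ = pathCost w (a :: x :: M') := rfl

end PC


section Graph

/-- Deleting an edge whose endpoints remain connected preserves reachability. -/
lemma pres (E : Finset (Sym2 V)) (a b : V)
    (hab : (fromEdgeSet ((E.erase s(a, b) : Finset (Sym2 V)) : Set (Sym2 V))).Reachable a b) :
    ∀ u v : V, (fromEdgeSet (E : Set (Sym2 V))).Reachable u v →
      (fromEdgeSet ((E.erase s(a, b) : Finset (Sym2 V)) : Set (Sym2 V))).Reachable u v := by
  intro u v huv
  obtain ⟨p⟩ := huv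
  induction p with
  | nil => exact SimpleGraph.Reachable.refl _
  | @cons u x v h q ih =>
    rw [SimpleGraph.fromEdgeSet_adj] at h
    obtain ⟨hmem, hne⟩ := h
    by_cases he : s(u, x) = s(a, b)
    · rcases Sym2.eq_iff.mp he with ⟨rfl, rfl⟩ | ⟨rfl, rfl⟩
      · exact hab.trans ih
      · exact hab.symm.trans ih
    · have hadj : (fromEdgeSet ((E.erase s(a, b) : Finset (Sym2 V)) : Set (Sym2 V))).Adj u x := by
        rw [SimpleGraph.fromEdgeSet_adj]
        refine ⟨?_, hne⟩
        have : s(u, x) ∈ E.erase s(a, b) := Finset.mem_erase.mpr ⟨he, by simpa using hmem⟩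
        exact_mod_cast this
      exact hadj.reachable.trans ih

/-- After deleting an edge, every vertex reachable from one endpoint is reachable from
one of the two endpoints in the smaller graph. -/
lemma split (E : Finset (Sym2 V)) (a b : V) :
    ∀ u v : V, (fromEdgeSet (E : Set (Sym2 V))).Walk u v →
      ((fromEdgeSet ((E.erase s(a, b) : Finset (Sym2 V)) : Set (Sym2 V))).Reachable a u ∨
       (fromEdgeSet ((E.erase s(a, b) : Finset (Sym2 V)) : Set (Sym2 V))).Reachable b u) →
      ((fromEdgeSet ((E.erase s(a, b) : Finset (Sym2 V)) : Set (Sym2 V))).Reachable a v ∨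
       (fromEdgeSet ((E.erase s(a, b) : Finset (Sym2 V)) : Set (Sym2 V))).Reachable b v) := by
  intro u v p
  induction p with
  | nil => exact fun h => h
  | @cons u x v h q ih =>
    intro hu
    rw [SimpleGraph.fromEdgeSet_adj] at h
    obtain ⟨hmem, hne⟩ := h
    by_cases he : s(u, x) = s(a, b)
    · rcases Sym2.eq_iff.mp he with ⟨rfl, rfl⟩ | ⟨rfl, rfl⟩
      · exact ih (Or.inr (SimpleGraph.Reachable.refl _))
      · exact ih (Or.inl (SimpleGraph.Reachable.refl _))
    · have hadj : (fromEdgeSet ((E.erase s(a, b) : Finset (Sym2 V)) : Set (Sym2 V))).Adj u x := by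
        rw [SimpleGraph.fromEdgeSet_adj]
        refine ⟨?_, hne⟩
        have : s(u, x) ∈ E.erase s(a, b) := Finset.mem_erase.mpr ⟨he, by simpa using hmem⟩
        exact_mod_cast this
      rcases hu with h1 | h1
      · exact ih (Or.inl (h1.trans hadj.reachable))
      · exact ih (Or.inr (h1.trans hadj.reachable))

/-- A walk whose edges all lie in a subset (by the criterion `h`) gives reachability in
the subgraph. -/
lemma walk_in_sub (F F' : Finset (Sym2 V)) (r : V)
    (h : ∀ u x : V, s(u, x) ∈ F → (fromEdgeSet (F : Set (Sym2 V))).Reachable r u →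
      s(u, x) ∈ F') :
    ∀ u v : V, (fromEdgeSet (F : Set (Sym2 V))).Walk u v →
      (fromEdgeSet (F : Set (Sym2 V))).Reachable r u →
      (fromEdgeSet (F' : Set (Sym2 V))).Reachable u v := by
  intro u v p
  induction p with
  | nil => exact fun _ => SimpleGraph.Reachable.refl _
  | @cons u x v h' q ih =>
    intro hru
    have h'' := h'
    rw [SimpleGraph.fromEdgeSet_adj] at h''
    obtain ⟨hmem, hne⟩ := h''
    have hmem' : s(u, x) ∈ F' := h u x (by simpa using hmem) hru
    have hadj : (fromEdgeSet (F' : Set (Sym2 V))).Adj u x := by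
      rw [SimpleGraph.fromEdgeSet_adj]; exact ⟨by simpa using hmem', hne⟩
    exact hadj.reachable.trans (ih (hru.trans h'.reachable))

end Graph


lemma tour (w : V → V → ℝ) (hsymm : ∀ a b, w a b = w b a) (h0 : ∀ a, w a a = 0)
    (hnn : ∀ a b, 0 ≤ w a b) (htri : ∀ a b c, w a c ≤ w a b + w b c) :
    ∀ E : Finset (Sym2 V), ∀ S : Finset V, ∀ r : V,
      (∀ s ∈ S, (fromEdgeSet (E : Set (Sym2 V))).Reachable r s) →
      ∃ L : List V, (∀ s ∈ S, s ∈ (r :: L)) ∧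
        pathCost w (r :: (L ++ [r])) ≤ 2 * treeCost w E := by
  intro E
  induction E using Finset.strongInduction with
  | _ E ihE =>
    intro S r hreach
    by_cases hS : ∀ s ∈ S, s = r
    · refine ⟨[], fun s hs => by simp [hS s hs], ?_⟩
      have hn := treeCost_nonneg w hnn E
      simp [h0 r]
      linarith
    · push_neg at hS
      obtain ⟨s0, hs0, hs0r⟩ := hS
      obtain ⟨p⟩ := hreach s0 hs0
      cases p with
      | nil => exact absurd rfl hs0r
      | @cons _ b _ h q =>
        have h' := h
        rw [SimpleGraph.fromEdgeSet_adj] at h'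
        obtain ⟨hmem, hrb⟩ := h'
        have hmemE : s(r, b) ∈ E := by simpa using hmem
        have hFE : E.erase s(r, b) ⊂ E := Finset.erase_ssubset hmemE
        set F := E.erase s(r, b) with hFdef
        set G' := fromEdgeSet (F : Set (Sym2 V)) with hG'def
        by_cases hb : G'.Reachable r b
        · have hpres := pres E r b hb
          obtain ⟨L, hmemL, hcost⟩ := ihE F hFE S r (fun s hs => hpres r s (hreach s hs))
          refine ⟨L, hmemL, hcost.trans ?_⟩
          have := treeCost_mono w hnn hFE.subset
          linarith
        · set Ea := F.filter (fun e' => ∀ x ∈ e', G'.Reachable r x) with hEadef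
          set Eb := F \ Ea with hEbdef
          set Sa := S.filter (fun s => G'.Reachable r s) with hSadef
          set Sb := S.filter (fun s => ¬ G'.Reachable r s) with hSbdef
          have hEaF : Ea ⊆ F := Finset.filter_subset _ _
          have hEbF : Eb ⊆ F := Finset.sdiff_subset
          have hEa : Ea ⊂ E := Finset.ssubset_of_subset_of_ssubset hEaF hFE
          have hEb : Eb ⊂ E := Finset.ssubset_of_subset_of_ssubset hEbF hFE
          have hcritA : ∀ u x : V, s(u, x) ∈ F → G'.Reachable r u → s(u, x) ∈ Ea := by
            intro u x hm hru
            refine Finset.mem_filter.mpr ⟨hm, ?_⟩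
            intro y hy
            rcases Sym2.mem_iff.mp hy with rfl | rfl
            · exact hru
            · by_cases hux : u = y
              · exact hux ▸ hru
              · have hadj : G'.Adj u y := by
                  rw [hG'def, SimpleGraph.fromEdgeSet_adj]
                  exact ⟨by simpa using hm, hux⟩
                exact hru.trans hadj.reachable
          have hreachA : ∀ s ∈ Sa, (fromEdgeSet (Ea : Set (Sym2 V))).Reachable r s := by
            intro s hs
            obtain ⟨hsS, hrs⟩ := Finset.mem_filter.mp hs
            obtain ⟨p⟩ := hrs
            exact walk_in_sub F Ea r hcritA r s p (SimpleGraph.Reachable.refl _)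
          have hcritB : ∀ u x : V, s(u, x) ∈ F → G'.Reachable b u → s(u, x) ∈ Eb := by
            intro u x hm hbu
            refine Finset.mem_sdiff.mpr ⟨hm, fun hmA => ?_⟩
            have hru : G'.Reachable r u :=
              (Finset.mem_filter.mp hmA).2 u (by simp)
            exact hb (hru.trans hbu.symm)
          have hreachB : ∀ s ∈ Sb, (fromEdgeSet (Eb : Set (Sym2 V))).Reachable b s := by
            intro s hs
            obtain ⟨hsS, hrs⟩ := Finset.mem_filter.mp hs
            have hbs : G'.Reachable b s := by
              obtain ⟨p⟩ := hreach s hsS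
              rcases split E r b r s p (Or.inl (SimpleGraph.Reachable.refl _)) with h1 | h1
              · exact absurd h1 hrs
              · exact h1
            obtain ⟨p⟩ := hbs
            exact walk_in_sub F Eb b hcritB b s p (SimpleGraph.Reachable.refl _)
          obtain ⟨La, hmA, hcA⟩ := ihE Ea hEa Sa r hreachA
          obtain ⟨Lb, hmB, hcB⟩ := ihE Eb hEb Sb b hreachB
          refine ⟨(b :: Lb) ++ La, ?_, ?_⟩
          · intro s hs
            by_cases hrs : G'.Reachable r s
            · have := hmA s (Finset.mem_filter.mpr ⟨hs, hrs⟩)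
              simp only [List.mem_cons, List.mem_append] at this ⊢
              tauto
            · have := hmB s (Finset.mem_filter.mpr ⟨hs, hrs⟩)
              simp only [List.mem_cons, List.mem_append] at this ⊢
              tauto
          · have hlist : r :: (((b :: Lb) ++ La) ++ [r]) =
                r :: ((b :: Lb) ++ (La ++ [r])) := by simp
            rw [hlist]
            have step1 : pathCost w (r :: ((b :: Lb) ++ (La ++ [r]))) =
                w r b + pathCost w ((b :: Lb) ++ (La ++ [r])) := rfl
            have key1 := pathCost_via w hnn htri (b :: Lb) (La ++ [r]) b
            have key2 := pathCost_cons_le w hnn htri (La ++ [r]) b r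
            have hsum1 : treeCost w Eb + treeCost w Ea = treeCost w F := by
              rw [hEbdef]
              exact Finset.sum_sdiff hEaF
            have hsum2 : edgeW w s(r, b) + treeCost w F = treeCost w E := by
              rw [hFdef]
              exact Finset.add_sum_erase E (edgeW w) hmemE
            have hew : edgeW w s(r, b) = w r b := edgeW_mk w hsymm r b
            have hwbr : w b r = w r b := (hsymm r b).symm
            have hB' : pathCost w ((b :: Lb) ++ [b]) ≤ 2 * treeCost w Eb := by
              have : (b :: Lb) ++ [b] = b :: (Lb ++ [b]) := rfl
              rw [this]; exact hcB
            rw [step1]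
            calc w r b + pathCost w ((b :: Lb) ++ (La ++ [r]))
                ≤ w r b + (pathCost w ((b :: Lb) ++ [b]) +
                    pathCost w (b :: (La ++ [r]))) := by linarith
              _ ≤ w r b + (2 * treeCost w Eb +
                    (w b r + pathCost w (r :: (La ++ [r])))) := by linarith
              _ ≤ w r b + (2 * treeCost w Eb + (w b r + 2 * treeCost w Ea)) := by linarith
              _ = 2 * treeCost w E := by
                  rw [hwbr, ← hsum2, hew, ← hsum1]; ring


def pathEdges : List V → Finset (Sym2 V)
  | [] => ∅
  | [_] => ∅
  | a :: b :: l => insert s(a, b) (pathEdges (b :: l))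

@[simp] lemma pathEdges_nil : pathEdges ([] : List V) = ∅ := rfl
@[simp] lemma pathEdges_single (a : V) : pathEdges [a] = ∅ := rfl
@[simp] lemma pathEdges_cons₂ (a b : V) (l : List V) :
    pathEdges (a :: b :: l) = insert s(a, b) (pathEdges (b :: l)) := rfl

lemma mem_pathEdges : ∀ (M : List V) (e : Sym2 V), e ∈ pathEdges M → ∀ x ∈ e, x ∈ M := by
  intro M
  induction M with
  | nil => simp
  | cons a M' ih =>
    cases M' with
    | nil => simp
    | cons b l =>
      intro e he x hx
      rw [pathEdges_cons₂, Finset.mem_insert] at he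
      rcases he with rfl | he
      · rcases Sym2.mem_iff.mp hx with rfl | rfl
        · exact List.mem_cons_self
        · exact List.mem_cons_of_mem _ List.mem_cons_self
      · exact List.mem_cons_of_mem _ (ih e he x hx)

lemma treeCost_pathEdges (w : V → V → ℝ) (hsymm : ∀ a b, w a b = w b a)
    (hnn : ∀ a b, 0 ≤ w a b) : ∀ M : List V, treeCost w (pathEdges M) ≤ pathCost w M := by
  intro M
  induction M with
  | nil => simp [treeCost]
  | cons a M' ih =>
    cases M' with
    | nil => simp [treeCost]
    | cons b l =>
      rw [pathEdges_cons₂, pathCost_cons₂]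
      by_cases hm : s(a, b) ∈ pathEdges (b :: l)
      · rw [Finset.insert_eq_self.mpr hm]
        have := hnn a b
        linarith
      · show treeCost w _ ≤ _
        rw [treeCost, Finset.sum_insert hm, edgeW_mk w hsymm]
        exact add_le_add le_rfl ih

lemma reach_pathEdges : ∀ (M : List V) (a x : V), x ∈ a :: M →
    (fromEdgeSet ((pathEdges (a :: M) : Finset (Sym2 V)) : Set (Sym2 V))).Reachable a x := by
  intro M
  induction M with
  | nil =>
    intro a x hx
    simp only [List.mem_singleton] at hx
    exact hx ▸ SimpleGraph.Reachable.refl _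
  | cons b l ih =>
    intro a x hx
    rcases List.mem_cons.mp hx with rfl | hx'
    · exact SimpleGraph.Reachable.refl _
    · have h2 : (fromEdgeSet ((pathEdges (b :: l) : Finset (Sym2 V)) : Set (Sym2 V))).Reachable b x :=
        ih b x hx'
      have hsub : (pathEdges (b :: l) : Set (Sym2 V)) ⊆ (pathEdges (a :: b :: l) : Set (Sym2 V)) := by
        rw [pathEdges_cons₂]
        intro e he
        simp only [Finset.coe_insert, Set.mem_insert_iff]
        right; exact he
      have h2' := h2.mono (SimpleGraph.fromEdgeSet_mono hsub)
      have hab : (fromEdgeSet ((pathEdges (a :: b :: l) : Finset (Sym2 V)) : Set (Sym2 V))).Reachable a b := by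
        by_cases heq : a = b
        · exact heq ▸ SimpleGraph.Reachable.refl _
        · refine SimpleGraph.Adj.reachable ?_
          rw [SimpleGraph.fromEdgeSet_adj]
          exact ⟨by simp, heq⟩
      exact hab.trans h2'

lemma fromEdgeSet_filter_nondiag (P : Finset (Sym2 V)) :
    fromEdgeSet ((P.filter (fun e => ¬ e.IsDiag) : Finset (Sym2 V)) : Set (Sym2 V)) =
      fromEdgeSet (P : Set (Sym2 V)) := by
  ext x y
  simp only [SimpleGraph.fromEdgeSet_adj, Finset.coe_filter, Set.mem_setOf_eq,
    Finset.mem_coe, Sym2.isDiag_iff_proj_eq]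
  constructor
  · rintro ⟨⟨h1, _⟩, h3⟩; exact ⟨h1, h3⟩
  · rintro ⟨h1, h3⟩; exact ⟨⟨h1, h3⟩, h3⟩

lemma fromEdgeSet_erase_eq (E' : Finset (Sym2 V)) (x y : V) :
    fromEdgeSet (E' : Set (Sym2 V)) \ fromEdgeSet {s(x, y)} =
      fromEdgeSet ((E'.erase s(x, y) : Finset (Sym2 V)) : Set (Sym2 V)) := by
  ext u v
  simp only [SimpleGraph.sdiff_adj, SimpleGraph.fromEdgeSet_adj, Set.mem_singleton_iff,
    Finset.coe_erase, Set.mem_diff, Finset.mem_coe, Set.mem_singleton_iff]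
  tauto

lemma exists_acyclic (P : Finset (Sym2 V)) (T : Finset V) (hconn : Connects P T) :
    ∃ E' : Finset (Sym2 V), E' ⊆ P ∧ Connects E' T ∧
      (fromEdgeSet (E' : Set (Sym2 V))).IsAcyclic := by
  classical
  set S := (P.powerset).filter (fun F => Connects F T) with hSdef
  have hne : S.Nonempty :=
    ⟨P, Finset.mem_filter.mpr ⟨Finset.mem_powerset.mpr (subset_refl P), hconn⟩⟩
  obtain ⟨E', hE'S, hmin⟩ := Finset.exists_min_image S Finset.card hne
  obtain ⟨hE'P, hE'c⟩ := Finset.mem_filter.mp hE'S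
  have hE'P := Finset.mem_powerset.mp hE'P
  refine ⟨E', hE'P, hE'c, ?_⟩
  intro v c hc
  cases c with
  | nil => exact hc.ne_nil rfl
  | @cons _ x _ hadj q =>
    have he : s(v, x) ∈ (SimpleGraph.Walk.cons hadj q).edges := by
      simp [SimpleGraph.Walk.edges_cons]
    have key := (SimpleGraph.adj_and_reachable_delete_edges_iff_exists_cycle).mpr
      ⟨v, _, hc, he⟩
    obtain ⟨hadj', hreach'⟩ := key
    rw [SimpleGraph.deleteEdges, fromEdgeSet_erase_eq] at hreach'
    have hmemE' : s(v, x) ∈ E' := by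
      rw [SimpleGraph.fromEdgeSet_adj] at hadj'
      simpa using hadj'.1
    have hconn'' : Connects (E'.erase s(v, x)) T := fun u hu v' hv' =>
      pres E' v x hreach' u v' (hE'c u hu v' hv')
    have hS'' : E'.erase s(v, x) ∈ S := Finset.mem_filter.mpr
      ⟨Finset.mem_powerset.mpr ((Finset.erase_subset _ _).trans hE'P), hconn''⟩
    have h1 := hmin _ hS''
    have h2 := Finset.card_erase_lt_of_mem hmemE'
    omega

end StAux

/-- In a metric space, for every Steiner tree `E` of the terminal set `T` there is a
spanning tree of the induced metric on `T` (a Steiner tree all of whose edges join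
terminals) of cost at most twice the cost of `E`.  In particular the minimum terminal
spanning tree cost is at most twice the minimum Steiner tree cost. -/
theorem stmt9 {V : Type*} [DecidableEq V] (w : V → V → ℝ)
    (hsymm : ∀ a b, w a b = w b a) (h0 : ∀ a, w a a = 0)
    (hnn : ∀ a b, 0 ≤ w a b) (htri : ∀ a b c, w a c ≤ w a b + w b c)
    (T : Finset V) (E : Finset (Sym2 V)) (hE : IsSteinerTree E T) :
    ∃ E' : Finset (Sym2 V), IsSteinerTree E' T ∧ (∀ e ∈ E', ∀ x ∈ e, x ∈ T) ∧
      treeCost w E' ≤ 2 * treeCost w E := by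
  classical
  obtain ⟨hnd, hac, hconn⟩ := hE
  rcases T.eq_empty_or_nonempty with hT | ⟨r, hr⟩
  · refine ⟨∅, ⟨by simp, ?_, ?_⟩, by simp, ?_⟩
    · intro v c hc
      cases c with
      | nil => exact hc.ne_nil rfl
      | cons h q =>
        rw [SimpleGraph.fromEdgeSet_adj] at h
        simp at h
    · intro u hu
      rw [hT] at hu
      exact absurd hu (Finset.notMem_empty u)
    · have h1 : treeCost w (∅ : Finset (Sym2 V)) = 0 := by simp [treeCost]
      have := StAux.treeCost_nonneg w hnn E
      rw [h1]
      linarith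
  · have hreach : ∀ s ∈ T, (SimpleGraph.fromEdgeSet (E : Set (Sym2 V))).Reachable r s :=
      fun s hs => hconn r hr s hs
    obtain ⟨L, hLmem, hLcost⟩ := StAux.tour w hsymm h0 hnn htri E T r hreach
    set M := (r :: L).filter (fun x => decide (x ∈ T)) with hMdef
    have hM : M = r :: (L.filter (fun x => decide (x ∈ T))) := by
      rw [hMdef, List.filter_cons_of_pos (by simpa using hr)]
    have hMc : StAux.pathCost w M ≤ 2 * treeCost w E := by
      calc StAux.pathCost w M ≤ StAux.pathCost w (r :: L) := by
            rw [hM]; exact StAux.pathCost_filter w hnn htri _ L r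
        _ ≤ StAux.pathCost w ((r :: L) ++ [r]) :=
            StAux.pathCost_append_single w hnn htri (r :: L) r
        _ = StAux.pathCost w (r :: (L ++ [r])) := rfl
        _ ≤ 2 * treeCost w E := hLcost
    have hMT : ∀ x ∈ M, x ∈ T := fun x hx => by
      simpa using (List.mem_filter.mp hx).2
    have hTM : ∀ x ∈ T, x ∈ M := fun x hx =>
      List.mem_filter.mpr ⟨hLmem x hx, by simpa⟩
    set P := (StAux.pathEdges M).filter (fun e => ¬ e.IsDiag) with hPdef
    have hPconn : Connects P T := by
      intro u hu v hv
      have hgr : SimpleGraph.fromEdgeSet (P : Set (Sym2 V)) =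
          SimpleGraph.fromEdgeSet ((StAux.pathEdges M : Finset (Sym2 V)) : Set (Sym2 V)) :=
        StAux.fromEdgeSet_filter_nondiag _
      rw [hgr]
      have h1 : (SimpleGraph.fromEdgeSet
          ((StAux.pathEdges M : Finset (Sym2 V)) : Set (Sym2 V))).Reachable r u := by
        rw [hM]
        exact StAux.reach_pathEdges _ r u (by rw [← hM]; exact hTM u hu)
      have h2 : (SimpleGraph.fromEdgeSet
          ((StAux.pathEdges M : Finset (Sym2 V)) : Set (Sym2 V))).Reachable r v := by
        rw [hM]
        exact StAux.reach_pathEdges _ r v (by rw [← hM]; exact hTM v hv)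
      exact h1.symm.trans h2
    obtain ⟨E', hE'P, hE'conn, hE'ac⟩ := StAux.exists_acyclic P T hPconn
    refine ⟨E', ⟨?_, hE'ac, hE'conn⟩, ?_, ?_⟩
    · intro e he
      exact (Finset.mem_filter.mp (hE'P he)).2
    · intro e he x hx
      have heP := Finset.mem_filter.mp (hE'P he)
      exact hMT x (StAux.mem_pathEdges M e heP.1 x hx)
    · calc treeCost w E' ≤ treeCost w P := StAux.treeCost_mono w hnn hE'P
        _ ≤ treeCost w (StAux.pathEdges M) :=
            StAux.treeCost_mono w hnn (Finset.filter_subset _ _)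
        _ ≤ StAux.pathCost w M := StAux.treeCost_pathEdges w hsymm hnn M
        _ ≤ 2 * treeCost w E := hMc
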